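/- Clifford inequality for weighted graphs with loops: If d is a divisor on a connected weighted graph G (possibly with loops) of genus g with 0 ≤ deg(d) ≤ 2g − 2, then 2·r_G(d) ≤ deg(d), where r_G is the rank defined via the associated weightless loopless graph G^•. -/

import Mathlib

open Finset

section Preliminaries

variable {V : Type} [Fintype V] [DecidableEq V]

/-- The degree of a divisor on a graph with vertex set `V`. -/
def degDiv (d : V → ℤ) : ℤ := ∑ v, d v

/-- A divisor is effective if it is nonnegative at every vertex. -/
def Effective (d : V → ℤ) : Prop := ∀ v, 0 ≤ d v

/-- The principal divisor `t_Z` associated to a subset `Z` of vertices, for the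
graph with edge multiplicity function `m`. -/
def tZ (m : V → V → ℕ) (Z : Finset V) : V → ℤ := fun v =>
  if v ∈ Z then -(∑ u ∈ Zᶜ, (m v u : ℤ)) else ∑ u ∈ Z, (m v u : ℤ)

/-- Two divisors are linearly equivalent if their difference lies in the subgroup
generated by the divisors `t_Z`. -/
def LinEquiv (m : V → V → ℕ) (d d' : V → ℤ) : Prop :=
  d - d' ∈ AddSubgroup.closure (Set.range (tZ m))

/-- The simple graph associated to an edge multiplicity function `m`
(an edge between distinct `u`, `v` whenever `m u v > 0`; loops are discarded). -/
def assocGraph (m : V → V → ℕ) : SimpleGraph V where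
  Adj u v := u ≠ v ∧ (0 < m u v ∨ 0 < m v u)
  symm := ⟨fun _ _ h => ⟨h.1.symm, h.2.symm⟩⟩
  loopless := ⟨fun _ h => h.1 rfl⟩

end Preliminaries

section Rank

variable {V : Type} [Fintype V] [DecidableEq V]

/-- The set of integers `k` such that either `k = -1`, or `k ≥ 0` and for every
effective divisor `e` of degree `k`, the divisor `d - e` is linearly equivalent
to an effective divisor. -/
def bnRankSet (m : V → V → ℕ) (d : V → ℤ) : Set ℤ :=
  {k : ℤ | k = -1 ∨ (0 ≤ k ∧ ∀ e : V → ℤ, Effective e → degDiv e = k →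
      ∃ f : V → ℤ, Effective f ∧ LinEquiv m (d - e) f)}

/-- The Baker–Norine rank of a divisor `d` on the weightless loopless multigraph
with edge multiplicity function `m`. -/
noncomputable def bnRank (m : V → V → ℕ) (d : V → ℤ) : ℤ := sSup (bnRankSet m d)

end Rank

section Weighted

variable {V : Type} [Fintype V] [DecidableEq V]

/-- The valence of a vertex of a weighted graph with loops:
`val(v) = ∑_{u ≠ v} m v u + 2 * m v v`. -/
def valence (m : V → V → ℕ) (v : V) : ℤ := (∑ u, (m v u : ℤ)) + m v v

/-- The genus of a weighted graph with loops:
`g = |E| - |V| + 1 + ∑_v ω v` where `|E| = ∑_v m v v + (1/2) ∑_{u ≠ v} m u v`. -/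
def genusW (m : V → V → ℕ) (ω : V → ℕ) : ℤ :=
  ((∑ u, ∑ v, (m u v : ℤ)) + ∑ v, (m v v : ℤ)) / 2 - Fintype.card V + 1
    + ∑ v, (ω v : ℤ)

/-- The canonical divisor of a weighted graph with loops:
`k_G(v) = 2 ω(v) - 2 + val(v)`. -/
def canonicalW (m : V → V → ℕ) (ω : V → ℕ) : V → ℤ :=
  fun v => 2 * (ω v : ℤ) - 2 + valence m v

end Weighted

section Bullet

variable {V : Type} [Fintype V] [DecidableEq V]

/-- The vertex set of the associated weightless loopless graph `G^•`:
the original vertices together with `ω v + m v v` new vertices for each `v`. -/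
abbrev BV (ω : V → ℕ) (m : V → V → ℕ) : Type := V ⊕ (Σ v : V, Fin (ω v + m v v))

/-- The edge multiplicity function of the associated weightless loopless graph `G^•`. -/
def bulletM (ω : V → ℕ) (m : V → V → ℕ) : BV ω m → BV ω m → ℕ
  | Sum.inl u, Sum.inl v => if u = v then 0 else m u v
  | Sum.inl u, Sum.inr ⟨v, _⟩ => if u = v then 2 else 0
  | Sum.inr ⟨u, _⟩, Sum.inl v => if u = v then 2 else 0
  | Sum.inr _, Sum.inr _ => 0

/-- The extension-by-zero of a divisor on `G` to a divisor on `G^•`. -/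
def iota (ω : V → ℕ) (m : V → V → ℕ) (d : V → ℤ) : BV ω m → ℤ
  | Sum.inl v => d v
  | Sum.inr _ => 0

/-- The rank of a divisor on a weighted graph with loops, defined as the
Baker–Norine rank of its extension by zero to `G^•`. -/
noncomputable def wRank (ω : V → ℕ) (m : V → V → ℕ) (d : V → ℤ) : ℤ :=
  bnRank (bulletM ω m) (iota ω m d)

end Bullet

set_option linter.unusedSectionVars false
namespace Cliff
variable {W : Type} [Fintype W] [DecidableEq W]
def lap (M : W → W → ℕ) (x : W → ℤ) : W → ℤ := fun v => ∑ u, (M v u : ℤ) * (x u - x v)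
lemma lap_add (M : W → W → ℕ) (x y : W → ℤ) : lap M (x + y) = lap M x + lap M y := by
  funext v; simp only [lap, Pi.add_apply]; rw [← Finset.sum_add_distrib]
  exact Finset.sum_congr rfl fun u _ => by ring
lemma lap_neg (M : W → W → ℕ) (x : W → ℤ) : lap M (-x) = - lap M x := by
  funext v; simp only [lap, Pi.neg_apply]; rw [← Finset.sum_neg_distrib]
  exact Finset.sum_congr rfl fun u _ => by ring
lemma lap_zero (M : W → W → ℕ) : lap M 0 = 0 := by funext v; simp [lap]
lemma tZ_eq_lap (M : W → W → ℕ) (Z : Finset W) :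
    tZ M Z = lap M (fun v => if v ∈ Z then 1 else 0) := by
  funext v
  by_cases hv : v ∈ Z
  · simp only [tZ, lap, hv, if_pos]
    rw [← Finset.sum_neg_distrib]
    rw [← Finset.sum_compl_add_sum Z (fun u => (M v u : ℤ) * ((if u ∈ Z then 1 else 0) - 1))]
    have h1 : ∑ u ∈ Zᶜ, (M v u : ℤ) * ((if u ∈ Z then 1 else 0) - 1)
        = ∑ u ∈ Zᶜ, -(M v u : ℤ) := by
      refine Finset.sum_congr rfl fun u hu => ?_
      rw [Finset.mem_compl] at hu
      simp [hu]
    have h2 : ∑ u ∈ Z, (M v u : ℤ) * ((if u ∈ Z then 1 else 0) - 1) = 0 := by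
      refine Finset.sum_eq_zero fun u hu => by simp [hu]
    rw [h1, h2, add_zero, Finset.sum_neg_distrib]
  · simp only [tZ, lap, hv, if_neg, if_false]
    rw [← Finset.sum_compl_add_sum Z (fun u => (M v u : ℤ) * ((if u ∈ Z then 1 else 0) - 0))]
    have h1 : ∑ u ∈ Zᶜ, (M v u : ℤ) * ((if u ∈ Z then 1 else 0) - 0) = 0 := by
      refine Finset.sum_eq_zero fun u hu => ?_
      rw [Finset.mem_compl] at hu
      simp [hu]
    have h2 : ∑ u ∈ Z, (M v u : ℤ) * ((if u ∈ Z then 1 else 0) - 0)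
        = ∑ u ∈ Z, (M v u : ℤ) := by
      refine Finset.sum_congr rfl fun u hu => by simp [hu]
    rw [h1, h2, zero_add]


/-- The Laplacian as an additive hom. -/
def lapHom (M : W → W → ℕ) : (W → ℤ) →+ (W → ℤ) where
  toFun := lap M
  map_zero' := lap_zero M
  map_add' := lap_add M

lemma lap_single (M : W → W → ℕ) (x : W → ℤ) :
    lap M x = ∑ v, x v • lap M (fun w => if w = v then 1 else 0) := by
  have : x = ∑ v, x v • (fun w => if w = v then (1:ℤ) else 0) := by
    funext w
    rw [Finset.sum_apply]
    simp only [Pi.smul_apply, smul_eq_mul, mul_ite, mul_one, mul_zero]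
    rw [Finset.sum_ite_eq univ w x]
    simp
  calc lap M x = lapHom M x := rfl
    _ = _ := by
      conv_lhs => rw [this]
      rw [map_sum]
      refine Finset.sum_congr rfl fun v _ => ?_
      rw [AddMonoidHom.map_zsmul]
      rfl

lemma linEquiv_iff (M : W → W → ℕ) (d d' : W → ℤ) :
    LinEquiv M d d' ↔ ∃ x : W → ℤ, d' = d + lap M x := by
  constructor
  · intro h
    have hsub : AddSubgroup.closure (Set.range (tZ M)) ≤ (lapHom (W := W) M).range := by
      rw [AddSubgroup.closure_le]
      rintro _ ⟨Z, rfl⟩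
      exact ⟨(fun v => if v ∈ Z then 1 else 0), (tZ_eq_lap M Z).symm⟩
    obtain ⟨x, hx⟩ := hsub h
    exact ⟨-x, by rw [lap_neg]; have : lap M x = d - d' := hx; rw [this]; abel⟩
  · rintro ⟨x, rfl⟩
    have h1 : d - (d + lap M x) = lap M (-x) := by rw [lap_neg]; abel
    rw [LinEquiv, h1, lap_single]
    refine AddSubgroup.sum_mem _ fun v _ => AddSubgroup.zsmul_mem _ ?_ _
    refine AddSubgroup.subset_closure ⟨{v}, ?_⟩
    rw [tZ_eq_lap]
    congr 1
    funext w
    simp [Finset.mem_singleton]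
def Equi (M : W → W → ℕ) (d d' : W → ℤ) : Prop := ∃ x, d' = d + lap M x

lemma equi_refl (M : W → W → ℕ) (d : W → ℤ) : Equi M d d := ⟨0, by rw [lap_zero]; abel⟩

lemma equi_symm {M : W → W → ℕ} {d d' : W → ℤ} (h : Equi M d d') : Equi M d' d := by
  obtain ⟨x, rfl⟩ := h
  exact ⟨-x, by rw [lap_neg]; abel⟩

lemma equi_trans {M : W → W → ℕ} {d d' d'' : W → ℤ} (h : Equi M d d') (h' : Equi M d' d'') :
    Equi M d d'' := by
  obtain ⟨x, rfl⟩ := h; obtain ⟨y, rfl⟩ := h'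
  exact ⟨x + y, by rw [lap_add]; abel⟩

lemma equi_add {M : W → W → ℕ} {a b c e : W → ℤ} (h : Equi M a b) (h' : Equi M c e) :
    Equi M (a + c) (b + e) := by
  obtain ⟨x, rfl⟩ := h; obtain ⟨y, rfl⟩ := h'
  exact ⟨x + y, by rw [lap_add]; abel⟩

lemma degDiv_add (d e : W → ℤ) : degDiv (d + e) = degDiv d + degDiv e :=
  Finset.sum_add_distrib

lemma degDiv_lap (M : W → W → ℕ) (hs : ∀ u v, M u v = M v u) (x : W → ℤ) :
    degDiv (lap M x) = 0 := by
  unfold degDiv lap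
  have h : ∀ v, ∑ u, (M v u : ℤ) * (x u - x v)
      = (∑ u, (M v u : ℤ) * x u) - ∑ u, (M v u : ℤ) * x v := by
    intro v; rw [← Finset.sum_sub_distrib]
    exact Finset.sum_congr rfl fun u _ => by ring
  simp_rw [h]
  rw [Finset.sum_sub_distrib, Finset.sum_comm (f := fun v u => (M v u : ℤ) * x u), sub_eq_zero]
  exact Finset.sum_congr rfl fun a _ => Finset.sum_congr rfl fun b _ => by rw [hs b a]

lemma degDiv_equi {M : W → W → ℕ} (hs : ∀ u v, M u v = M v u) {d d' : W → ℤ}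
    (h : Equi M d d') : degDiv d' = degDiv d := by
  obtain ⟨x, rfl⟩ := h
  rw [degDiv_add, degDiv_lap M hs x, add_zero]

lemma sum_mul_lap (M : W → W → ℕ) (hs : ∀ u v, M u v = M v u) (x y : W → ℤ) :
    ∑ v, y v * lap M x v = ∑ v, x v * lap M y v := by
  have key : ∀ z w : W → ℤ, ∑ v, z v * lap M w v
      = (∑ v, ∑ u, (M v u : ℤ) * z v * w u) - (∑ v, ∑ u, (M v u : ℤ) * z v * w v) := by
    intro z w
    unfold lap
    rw [← Finset.sum_sub_distrib]
    refine Finset.sum_congr rfl fun v _ => ?_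
    rw [Finset.mul_sum, ← Finset.sum_sub_distrib]
    exact Finset.sum_congr rfl fun u _ => by ring
  rw [key, key]
  congr 1
  · rw [Finset.sum_comm]
    exact Finset.sum_congr rfl fun a _ => Finset.sum_congr rfl fun b _ => by rw [hs b a]; ring
  · exact Finset.sum_congr rfl fun v _ => Finset.sum_congr rfl fun u _ => by ring

/-- The divisor ν attached to an "order" given by `p : W → ℕ`. -/
def Nu (M : W → W → ℕ) (p : W → ℕ) : W → ℤ :=
  fun v => (∑ u ∈ univ.filter (fun u => p u < p v), (M v u : ℤ)) - 1

/-- Claim A: ν is never equivalent to an effective divisor. -/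
lemma nu_not_eff [Nonempty W] (M : W → W → ℕ) (p : W → ℕ) (x : W → ℤ) :
    ¬ Effective (Nu M p + lap M x) := by
  intro h
  obtain ⟨v₀, -, hc⟩ := Finset.exists_max_image (univ : Finset W) x ⟨Classical.arbitrary W, mem_univ _⟩
  set c := x v₀ with hcdef
  have hA : (univ.filter (fun v => x v = c)).Nonempty := ⟨v₀, by simp [hcdef]⟩
  obtain ⟨v, hvA, hvmin⟩ := Finset.exists_min_image _ p hA
  rw [Finset.mem_filter] at hvA
  have hxv : x v = c := hvA.2
  have hout : ∀ u, p u < p v → x u ≤ c - 1 := by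
    intro u hu
    by_contra hcon
    push_neg at hcon
    have hxu : x u = c := le_antisymm (hc u (mem_univ u)) (by omega)
    have := hvmin u (by simp [hxu])
    omega
  have hlap : lap M x v ≤ ∑ u ∈ univ.filter (fun u => p u < p v), -(M v u : ℤ) := by
    calc lap M x v ≤ ∑ u ∈ univ.filter (fun u => p u < p v), (M v u : ℤ) * (x u - x v) := by
          have hneg := Finset.sum_le_sum_of_subset_of_nonneg
            (f := fun u => -((M v u : ℤ) * (x u - x v))) (Finset.filter_subset (fun u => p u < p v) univ) ?_
          · unfold lap
            rw [Finset.sum_neg_distrib, Finset.sum_neg_distrib] at hneg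
            omega
          · intro u _ _
            have h1 : x u - x v ≤ 0 := by have := hc u (mem_univ u); omega
            have h2 := mul_nonpos_of_nonneg_of_nonpos (a := (M v u : ℤ)) (by positivity) h1
            simpa using h2
      _ ≤ _ := by
          refine Finset.sum_le_sum fun u hu => ?_
          rw [Finset.mem_filter] at hu
          have h1 : x u - x v ≤ -1 := by have := hout u hu.2; omega
          calc (M v u : ℤ) * (x u - x v) ≤ (M v u : ℤ) * (-1) :=
                mul_le_mul_of_nonneg_left h1 (by positivity)
            _ = -(M v u : ℤ) := by ring
  have hv := h v
  simp only [Pi.add_apply, Nu] at hv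
  rw [Finset.sum_neg_distrib] at hlap
  omega

section Super

variable (M : W → W → ℕ)

/-- A big constant. -/
def Bc : ℕ := (∑ v, ∑ u, M v u) + 2

/-- The strictly superharmonic (off `q`) potential function. -/
noncomputable def fq (q : W) : W → ℤ :=
  fun v => (Bc M : ℤ) ^ (Fintype.card W)
    - (Bc M : ℤ) ^ (Fintype.card W - (assocGraph M).dist q v)

lemma Bc_ge_two : (2 : ℤ) ≤ (Bc M : ℤ) := by
  have h : 2 ≤ Bc M := by unfold Bc; omega
  exact_mod_cast h

lemma fq_self (q : W) : fq M q q = 0 := by simp [fq, SimpleGraph.dist_self]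

lemma fq_nonneg (q v : W) : 0 ≤ fq M q v := by
  have h2 := Bc_ge_two M
  exact sub_nonneg.mpr (pow_le_pow_right₀ (by omega) (Nat.sub_le _ _))

lemma dist_lt_card (hc : (assocGraph M).Connected) (q v : W) :
    (assocGraph M).dist q v < Fintype.card W := by
  obtain ⟨p⟩ := hc.preconnected q v
  calc (assocGraph M).dist q v ≤ p.bypass.length := SimpleGraph.dist_le _
    _ < Fintype.card W := p.bypass_isPath.length_lt

lemma exists_penultimate (hc : (assocGraph M).Connected) (q v : W) (hv : v ≠ q) :
    ∃ u, (assocGraph M).Adj v u ∧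
      (assocGraph M).dist q u + 1 = (assocGraph M).dist q v := by
  obtain ⟨p, hp⟩ := (hc.preconnected v q).exists_walk_length_eq_dist
  cases p with
  | nil => exact absurd rfl hv
  | @cons _ u _ h t =>
    refine ⟨u, h, ?_⟩
    have h1 : (assocGraph M).dist q u ≤ t.length := by
      calc (assocGraph M).dist q u = (assocGraph M).dist u q := SimpleGraph.dist_comm
        _ ≤ t.length := SimpleGraph.dist_le _
    have h2 : (assocGraph M).dist q v ≤ (assocGraph M).dist q u + 1 := by
      have hd1 : (assocGraph M).dist v u = 1 := SimpleGraph.dist_eq_one_iff_adj.mpr h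
      calc (assocGraph M).dist q v ≤ (assocGraph M).dist q u + (assocGraph M).dist u v :=
            hc.dist_triangle
        _ = (assocGraph M).dist q u + 1 := by
            rw [SimpleGraph.dist_comm (u := u)]; rw [hd1]
    have h3 : (assocGraph M).dist q v = t.length + 1 := by
      rw [SimpleGraph.dist_comm]
      simp only [SimpleGraph.Walk.length_cons] at hp
      omega
    omega

lemma lap_fq (hs : ∀ u v, M u v = M v u) (hd : ∀ v, M v v = 0)
    (hc : (assocGraph M).Connected) (q v : W) (hv : v ≠ q) :
    lap M (fq M q) v ≤ -1 := by
  have hB2 : (2:ℤ) ≤ (Bc M : ℤ) := Bc_ge_two M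
  have hk1 : 1 ≤ (assocGraph M).dist q v := hc.pos_dist_of_ne (fun h => hv h.symm)
  have hkn : (assocGraph M).dist q v + 1 ≤ Fintype.card W := dist_lt_card M hc q v
  obtain ⟨u₀, hadj, hdu₀⟩ := exists_penultimate M hc q v hv
  set B : ℤ := (Bc M : ℤ) with hB
  set X : ℤ := B ^ (Fintype.card W - (assocGraph M).dist q v - 1) with hX
  have hX1 : 1 ≤ X := one_le_pow₀ (by omega)
  set t : ℤ := (B - 1) * X with ht
  have ht1 : 1 ≤ t := by nlinarith
  have hfv : fq M q v = B ^ (Fintype.card W) - X * B := by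
    have e1 : Fintype.card W - (assocGraph M).dist q v
        = (Fintype.card W - (assocGraph M).dist q v - 1) + 1 := by omega
    rw [fq, ← hB, e1, pow_succ, hX]
  have hMu0 : 1 ≤ (M v u₀ : ℤ) := by
    rcases hadj.2 with h | h
    · exact_mod_cast h
    · rw [hs]; exact_mod_cast h
  have hfu0 : fq M q u₀ = B ^ (Fintype.card W) - X * B * B := by
    have e2 : Fintype.card W - (assocGraph M).dist q u₀
        = ((Fintype.card W - (assocGraph M).dist q v - 1) + 1) + 1 := by omega
    rw [fq, ← hB, e2, pow_succ, pow_succ, hX]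
  have hterm0 : (M v u₀ : ℤ) * (fq M q u₀ - fq M q v) ≤ -(B * t) := by
    have hval : fq M q u₀ - fq M q v = -(B * t) := by rw [hfu0, hfv, ht]; ring
    rw [hval]
    have hle : -(B * t) ≤ 0 := by nlinarith
    calc (M v u₀ : ℤ) * -(B * t) ≤ 1 * -(B * t) := mul_le_mul_of_nonpos_right hMu0 hle
      _ = -(B * t) := one_mul _
  have hterm : ∀ u ∈ univ.erase u₀, (M v u : ℤ) * (fq M q u - fq M q v) ≤ (M v u : ℤ) * t := by
    intro u _
    rcases Nat.eq_zero_or_pos (M v u) with h0 | hpos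
    · simp [h0]
    · have hne : u ≠ v := by
        intro h; rw [h, hd v] at hpos; omega
      have hadj' : (assocGraph M).Adj v u := ⟨Ne.symm hne, Or.inl hpos⟩
      have hdu : (assocGraph M).dist q u ≤ (assocGraph M).dist q v + 1 := by
        have hd1 : (assocGraph M).dist v u = 1 := SimpleGraph.dist_eq_one_iff_adj.mpr hadj'
        calc (assocGraph M).dist q u
            ≤ (assocGraph M).dist q v + (assocGraph M).dist v u := hc.dist_triangle
          _ = (assocGraph M).dist q v + 1 := by rw [hd1]
      have hfle : fq M q u - fq M q v ≤ t := by
        have hXle : X ≤ B ^ (Fintype.card W - (assocGraph M).dist q u) := by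
          rw [hX]
          exact pow_le_pow_right₀ (by omega) (by omega)
        have hfu : fq M q u = B ^ (Fintype.card W)
            - B ^ (Fintype.card W - (assocGraph M).dist q u) := by rw [fq, ← hB]
        rw [hfu, hfv, ht]
        nlinarith
      exact mul_le_mul_of_nonneg_left hfle (by positivity)
  have hsplit : lap M (fq M q) v
      = (M v u₀ : ℤ) * (fq M q u₀ - fq M q v)
        + ∑ u ∈ univ.erase u₀, (M v u : ℤ) * (fq M q u - fq M q v) := by
    rw [lap, ← Finset.add_sum_erase _ _ (mem_univ u₀)]
  have hsum2 : (∑ u ∈ univ.erase u₀, (M v u : ℤ)) ≤ B - 2 := by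
    have h1 : ∑ u ∈ univ.erase u₀, M v u ≤ ∑ u, M v u :=
      Finset.sum_le_sum_of_subset (Finset.erase_subset _ _)
    have h2 : ∑ u, M v u ≤ ∑ w, ∑ u, M w u :=
      Finset.single_le_sum (f := fun w => ∑ u, M w u) (fun _ _ => Nat.zero_le _) (mem_univ v)
    have h3 : ((∑ u ∈ univ.erase u₀, M v u : ℕ) : ℤ) ≤ ((∑ w, ∑ u, M w u : ℕ) : ℤ) := by
      exact_mod_cast le_trans h1 h2
    have h4 : B = ((∑ w, ∑ u, M w u : ℕ) : ℤ) + 2 := by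
      rw [hB]; unfold Bc; push_cast; ring
    have h5 : (∑ u ∈ univ.erase u₀, (M v u : ℤ)) = ((∑ u ∈ univ.erase u₀, M v u : ℕ) : ℤ) := by
      push_cast; rfl
    rw [h5]; omega
  have hrest : ∑ u ∈ univ.erase u₀, (M v u : ℤ) * (fq M q u - fq M q v) ≤ (B - 2) * t := by
    calc ∑ u ∈ univ.erase u₀, (M v u : ℤ) * (fq M q u - fq M q v)
        ≤ ∑ u ∈ univ.erase u₀, (M v u : ℤ) * t := Finset.sum_le_sum hterm
      _ = (∑ u ∈ univ.erase u₀, (M v u : ℤ)) * t := by rw [Finset.sum_mul]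
      _ ≤ (B - 2) * t := mul_le_mul_of_nonneg_right hsum2 (by omega)
  have hfinal : lap M (fq M q) v ≤ -(B * t) + (B - 2) * t := by
    rw [hsplit]; exact add_le_add hterm0 hrest
  nlinarith

end Super


section Dich

variable (M : W → W → ℕ)

lemma lap_zsmul (k : ℤ) (y : W → ℤ) : lap M (k • y) = k • lap M y :=
  AddMonoidHom.map_zsmul (lapHom M) k y

/-- Step 1: every divisor is equivalent to one which is effective away from `q`. -/
lemma exists_effective_off (hs : ∀ u v, M u v = M v u) (hd : ∀ v, M v v = 0)
    (hc : (assocGraph M).Connected) (q : W) (D : W → ℤ) :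
    ∃ x : W → ℤ, ∀ v, v ≠ q → 0 ≤ D v + lap M x v := by
  suffices h : ∀ j : ℕ, ∃ x : W → ℤ, ∀ v, v ≠ q →
      Fintype.card W - j ≤ (assocGraph M).dist q v → 0 ≤ D v + lap M x v by
    obtain ⟨x, hx⟩ := h (Fintype.card W)
    exact ⟨x, fun v hv => hx v hv (by omega)⟩
  intro j
  induction j with
  | zero =>
    refine ⟨0, fun v hv hdist => ?_⟩
    have := dist_lt_card M hc q v
    omega
  | succ j ih =>
    obtain ⟨x, hx⟩ := ih
    by_cases hc0 : Fintype.card W - (j+1) = 0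
    · refine ⟨x, fun v hv _ => hx v hv ?_⟩
      have h1 : 0 < (assocGraph M).dist q v := hc.pos_dist_of_ne (fun h => hv h.symm)
      omega
    · have hc1 : 1 ≤ Fintype.card W - (j+1) := by omega
      set c := Fintype.card W - (j+1) with hcdef
      set Z : Finset W := univ.filter (fun w => (assocGraph M).dist q w < c) with hZ
      set S : Finset W := univ.filter (fun w => (assocGraph M).dist q w = c) with hS
      set k : ℤ := ∑ v ∈ S, max (-(D v + lap M x v)) 0 with hk
      have hk0 : 0 ≤ k := Finset.sum_nonneg fun v _ => le_max_right _ _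
      refine ⟨x + k • (fun w => if w ∈ Z then 1 else 0), fun v hv hdist => ?_⟩
      have hlap : lap M (x + k • (fun w => if w ∈ Z then (1:ℤ) else 0)) v
          = lap M x v + k * tZ M Z v := by
        rw [lap_add, lap_zsmul, ← tZ_eq_lap]
        simp
      rw [hlap]
      have hvZ : v ∉ Z := by
        rw [hZ, Finset.mem_filter]
        push_neg
        intro _
        omega
      have htz : 0 ≤ tZ M Z v := by
        rw [tZ, if_neg hvZ]
        positivity
      rcases Nat.lt_or_ge c ((assocGraph M).dist q v) with hgt | heq
      · have h1 : 0 ≤ D v + lap M x v := hx v hv (by omega)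
        nlinarith
      · have heq' : (assocGraph M).dist q v = c := by omega
        have hvS : v ∈ S := by rw [hS, Finset.mem_filter]; exact ⟨mem_univ v, heq'⟩
        have hkv : -(D v + lap M x v) ≤ k := by
          calc -(D v + lap M x v) ≤ max (-(D v + lap M x v)) 0 := le_max_left _ _
            _ ≤ k := Finset.single_le_sum (f := fun v => max (-(D v + lap M x v)) 0)
                (fun u _ => le_max_right _ _) hvS
        have htz1 : 1 ≤ tZ M Z v := by
          obtain ⟨u₀, hadj, hdu₀⟩ := exists_penultimate M hc q v hv
          have hu₀Z : u₀ ∈ Z := by rw [hZ, Finset.mem_filter]; exact ⟨mem_univ _, by omega⟩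
          have hM1 : 1 ≤ (M v u₀ : ℤ) := by
            rcases hadj.2 with h | h
            · exact_mod_cast h
            · rw [hs]; exact_mod_cast h
          rw [tZ, if_neg hvZ]
          calc (1:ℤ) ≤ (M v u₀ : ℤ) := hM1
            _ ≤ ∑ u ∈ Z, (M v u : ℤ) := Finset.single_le_sum
                (f := fun u => (M v u : ℤ)) (fun u _ => by positivity) hu₀Z
        nlinarith

/-- Dichotomy, existence half: a divisor not equivalent to an effective one is
dominated by some ν. -/
theorem dichotomy_exist (hs : ∀ u v, M u v = M v u) (hd : ∀ v, M v v = 0)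
    (hc : (assocGraph M).Connected) (D : W → ℤ)
    (hne : ¬ ∃ E, Effective E ∧ Equi M D E) :
    ∃ (p : W → ℕ), Function.Injective p ∧
      ∃ F, Effective F ∧ Equi M (Nu M p - D) F := by
  have hW : Nonempty W := hc.nonempty
  obtain ⟨q⟩ := hW
  -- the feasible set of potential values
  set Φ : (W → ℤ) → ℤ := fun E => ∑ v, E v * fq M q v with hΦ
  set Sph : Set ℤ := {y : ℤ | ∃ x : W → ℤ,
      (∀ v, v ≠ q → 0 ≤ D v + lap M x v) ∧ y = Φ (D + lap M x)} with hSph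
  have hSne : Sph.Nonempty := by
    obtain ⟨x, hx⟩ := exists_effective_off M hs hd hc q D
    exact ⟨Φ (D + lap M x), x, hx, rfl⟩
  have hSbdd : BddBelow Sph := by
    refine ⟨0, fun y hy => ?_⟩
    obtain ⟨x, hx, rfl⟩ := hy
    refine Finset.sum_nonneg fun v _ => ?_
    by_cases hv : v = q
    · rw [hv, fq_self]; ring_nf; rfl
    · exact mul_nonneg (hx v hv) (fq_nonneg M q v)
  obtain ⟨x₀, hx₀, hval⟩ := Int.csInf_mem hSne hSbdd
  set D' : W → ℤ := D + lap M x₀ with hD'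
  -- D' q must be negative
  have hDq : D' q ≤ -1 := by
    by_contra hcon
    push_neg at hcon
    refine hne ⟨D', fun v => ?_, ⟨x₀, rfl⟩⟩
    by_cases hv : v = q
    · rw [hv]; omega
    · exact hx₀ v hv
  -- no stalling: greedy extension is always possible
  have hstall : ∀ B : Finset W, q ∈ B → B ≠ univ →
      ∃ v, v ∉ B ∧ D' v < ∑ u ∈ B, (M v u : ℤ) := by
    intro B hqB hBne
    by_contra hcon
    push_neg at hcon
    set A : Finset W := Bᶜ with hA
    have hAne : A.Nonempty := by
      rw [hA]
      rcases Finset.eq_empty_or_nonempty Bᶜ with h | h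
      · rw [Finset.compl_eq_empty_iff] at h
        exact absurd h hBne
      · exact h
    set x₁ : W → ℤ := x₀ + (fun w => if w ∈ A then 1 else 0) with hx₁
    have hD'' : D + lap M x₁ = fun v => D' v + tZ M A v := by
      funext v
      rw [hx₁, lap_add, ← tZ_eq_lap]
      simp [hD']
      ring
    have hfeas : ∀ v, v ≠ q → 0 ≤ D v + lap M x₁ v := by
      intro v hv
      have : (D + lap M x₁) v = D' v + tZ M A v := by rw [hD'']
      simp only [Pi.add_apply] at this
      rw [this]
      by_cases hvA : v ∈ A
      · have hvB : v ∉ B := by rwa [hA, Finset.mem_compl] at hvA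
        have h1 := hcon v hvB
        rw [tZ, if_pos hvA, hA, compl_compl]
        omega
      · have : 0 ≤ tZ M A v := by rw [tZ, if_neg hvA]; positivity
        have h2 := hx₀ v hv
        simp only [hD', Pi.add_apply]
        omega
    have hdec : Φ (D + lap M x₁) ≤ Φ D' - 1 := by
      have h1 : Φ (D + lap M x₁) = Φ D' + ∑ v, tZ M A v * fq M q v := by
        rw [hD'', hΦ]
        simp only [Pi.add_apply]
        rw [← Finset.sum_add_distrib]
        refine Finset.sum_congr rfl fun v _ => by ring
      have h2 : ∑ v, tZ M A v * fq M q v ≤ -1 := by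
        have h3 : ∑ v, tZ M A v * fq M q v
            = ∑ v, (fun w => if w ∈ A then (1:ℤ) else 0) v * lap M (fq M q) v := by
          rw [← sum_mul_lap M hs]
          refine Finset.sum_congr rfl fun v _ => by rw [tZ_eq_lap]; ring
        rw [h3]
        have h4 : ∑ v, (fun w => if w ∈ A then (1:ℤ) else 0) v * lap M (fq M q) v
            = ∑ v ∈ A, lap M (fq M q) v := by
          rw [← Finset.sum_filter_add_sum_filter_not univ (fun v => v ∈ A)]
          have e1 : univ.filter (fun v => v ∈ A) = A := by
            ext v; simp
          have e2 : ∑ v ∈ univ.filter (fun v => ¬ v ∈ A),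
              (fun w => if w ∈ A then (1:ℤ) else 0) v * lap M (fq M q) v = 0 := by
            refine Finset.sum_eq_zero fun v hv => ?_
            rw [Finset.mem_filter] at hv
            simp [hv.2]
          rw [e2, add_zero, e1]
          refine Finset.sum_congr rfl fun v hv => by simp [hv]
        rw [h4]
        have h5 : ∀ v ∈ A, lap M (fq M q) v ≤ -1 := by
          intro v hv
          have hvq : v ≠ q := by
            intro h
            rw [h, hA, Finset.mem_compl] at hv
            exact hv hqB
          exact lap_fq M hs hd hc q v hvq
        calc ∑ v ∈ A, lap M (fq M q) v ≤ ∑ v ∈ A, (-1 : ℤ) := Finset.sum_le_sum h5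
          _ = -(A.card : ℤ) := by rw [Finset.sum_const]; simp
          _ ≤ -1 := by
              have := hAne.card_pos
              omega
      omega
    have hmem : Φ (D + lap M x₁) ∈ Sph := ⟨x₁, hfeas, rfl⟩
    have := csInf_le hSbdd hmem
    omega
  -- greedy construction of the order
  have greedy : ∀ k : ℕ, 1 ≤ k → k ≤ Fintype.card W →
      ∃ (B : Finset W) (p : W → ℕ), B.card = k ∧ q ∈ B ∧ (∀ v ∈ B, p v < k) ∧
        Set.InjOn p B ∧
        (∀ v ∈ B, v ≠ q → D' v < ∑ u ∈ B.filter (fun u => p u < p v), (M v u : ℤ)) := by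
    intro k
    induction k with
    | zero => omega
    | succ k ih =>
      intro _ hkcard
      rcases Nat.eq_zero_or_pos k with hk0 | hk1
      · subst hk0
        refine ⟨{q}, fun _ => 0, by simp, by simp, by simp, ?_, ?_⟩
        · intro a ha b hb _
          simp only [Finset.coe_singleton, Set.mem_singleton_iff] at ha hb
          rw [ha, hb]
        · intro v hv hvq
          rw [Finset.mem_singleton] at hv
          exact absurd hv hvq
      · obtain ⟨B, p, hcard, hqB, hplt, hinj, hprop⟩ := ih hk1 (by omega)
        have hBne : B ≠ univ := by
          intro h
          rw [h, Finset.card_univ] at hcard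
          omega
        obtain ⟨v₀, hv₀B, hv₀⟩ := hstall B hqB hBne
        refine ⟨insert v₀ B, fun w => if w = v₀ then k else p w,
          by rw [Finset.card_insert_of_notMem hv₀B, hcard], Finset.mem_insert_of_mem hqB,
          ?_, ?_, ?_⟩
        · intro v hv
          rcases Finset.mem_insert.mp hv with h | h
          · simp [h]
          · have := hplt v h
            have hne : v ≠ v₀ := fun hh => hv₀B (hh ▸ h)
            simp [hne]
            omega
        · intro a ha b hb hab
          simp only [Finset.coe_insert, Set.mem_insert_iff, Finset.mem_coe] at ha hb
          have hab' : (if a = v₀ then k else p a) = (if b = v₀ then k else p b) := hab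
          rcases ha with ha | ha <;> rcases hb with hb | hb
          · rw [ha, hb]
          · exfalso
            have hbne : b ≠ v₀ := fun hh => hv₀B (hh ▸ hb)
            rw [if_pos ha, if_neg hbne] at hab'
            have := hplt b hb
            omega
          · exfalso
            have hane : a ≠ v₀ := fun hh => hv₀B (hh ▸ ha)
            rw [if_pos hb, if_neg hane] at hab'
            have := hplt a ha
            omega
          · have hane : a ≠ v₀ := fun hh => hv₀B (hh ▸ ha)
            have hbne : b ≠ v₀ := fun hh => hv₀B (hh ▸ hb)
            rw [if_neg hane, if_neg hbne] at hab'
            exact hinj ha hb hab'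
        · intro v hv hvq
          rcases Finset.mem_insert.mp hv with h | h
          · have hfil : (insert v₀ B).filter
                (fun u => (if u = v₀ then k else p u) < (if v = v₀ then k else p v)) = B := by
              ext u
              simp only [Finset.mem_filter, Finset.mem_insert, if_pos h]
              constructor
              · rintro ⟨h1 | h1, h2⟩
                · rw [if_pos h1] at h2; omega
                · exact h1
              · intro hu
                have hune : u ≠ v₀ := fun hh => hv₀B (hh ▸ hu)
                rw [if_neg hune]
                exact ⟨Or.inr hu, hplt u hu⟩
            rw [hfil, h]
            exact hv₀
          · have hvne : v ≠ v₀ := fun hh => hv₀B (hh ▸ h)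
            have hfil : (insert v₀ B).filter
                (fun u => (if u = v₀ then k else p u) < (if v = v₀ then k else p v))
                = B.filter (fun u => p u < p v) := by
              ext u
              simp only [Finset.mem_filter, Finset.mem_insert, if_neg hvne]
              constructor
              · rintro ⟨h1 | h1, h2⟩
                · rw [if_pos h1] at h2
                  have := hplt v h
                  omega
                · have hune : u ≠ v₀ := fun hh => hv₀B (hh ▸ h1)
                  rw [if_neg hune] at h2
                  exact ⟨h1, h2⟩
              · intro ⟨h1, h2⟩
                have hune : u ≠ v₀ := fun hh => hv₀B (hh ▸ h1)
                rw [if_neg hune]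
                exact ⟨Or.inr h1, h2⟩
            rw [hfil]
            exact hprop v h hvq
  -- conclude
  have hcard1 : 1 ≤ Fintype.card W := Fintype.card_pos_iff.mpr ⟨q⟩
  obtain ⟨B, p, hcard, hqB, _, hinj, hprop⟩ := greedy (Fintype.card W) hcard1 le_rfl
  have hBuniv : B = univ := Finset.eq_univ_of_card B hcard
  subst hBuniv
  refine ⟨p, fun a b hab => hinj (Finset.mem_coe.mpr (mem_univ a))
    (Finset.mem_coe.mpr (mem_univ b)) hab, fun v => Nu M p v - D' v, ?_, ?_⟩
  · intro v
    by_cases hv : v = q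
    · subst hv
      have : (0:ℤ) ≤ ∑ u ∈ univ.filter (fun u => p u < p v), (M v u : ℤ) := by positivity
      simp only [Nu]
      omega
    · have := hprop v (mem_univ v) hv
      simp only [Nu]
      omega
  · exact ⟨-x₀, by rw [lap_neg]; funext v; simp [hD', lap]; ring⟩

end Dich

section RankA

variable (M : W → W → ℕ)

lemma linEquiv_iff_equi (d d' : W → ℤ) : LinEquiv M d d' ↔ Equi M d d' := linEquiv_iff M d d'

/-- negative part degree -/
def dminus (H : W → ℤ) : ℤ := ∑ v, max (-(H v)) 0

lemma dminus_nonneg (H : W → ℤ) : 0 ≤ dminus H :=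
  Finset.sum_nonneg fun v _ => le_max_right _ _

lemma dminus_eq_zero_iff (H : W → ℤ) : dminus H = 0 ↔ Effective H := by
  rw [dminus, Finset.sum_eq_zero_iff_of_nonneg (fun v _ => le_max_right _ _)]
  constructor
  · intro h v
    have := h v (mem_univ v)
    omega
  · intro h v _
    have := h v
    omega

lemma dminus_neg (H : W → ℤ) : dminus (fun v => -(H v)) = dminus H + degDiv H := by
  rw [dminus, dminus, degDiv, ← Finset.sum_add_distrib]
  exact Finset.sum_congr rfl fun v _ => by omega

/-- The canonical injection `W → ℕ`. -/
noncomputable def pcan : W → ℕ := fun v => ((Fintype.equivFin W) v : ℕ)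

lemma pcan_inj : Function.Injective (pcan (W := W)) := by
  intro a b h
  exact (Fintype.equivFin W).injective (Fin.val_injective h)

/-- The set of values `deg⁻(ν_p - D + lap x)`. -/
def Tset (D : W → ℤ) : Set ℤ :=
  {y : ℤ | ∃ p : W → ℕ, Function.Injective p ∧
    ∃ x : W → ℤ, y = dminus (fun v => Nu M p v - D v + lap M x v)}

lemma Tset_nonempty (D : W → ℤ) : (Tset M D).Nonempty :=
  ⟨_, pcan, pcan_inj, 0, by rw [lap_zero]⟩

lemma Tset_bddBelow (D : W → ℤ) : BddBelow (Tset M D) := by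
  refine ⟨0, fun y hy => ?_⟩
  obtain ⟨p, hp, x, rfl⟩ := hy
  exact dminus_nonneg _

/-- μ(D) -/
noncomputable def muD (D : W → ℤ) : ℤ := sInf (Tset M D)

lemma muD_nonneg (D : W → ℤ) : 0 ≤ muD M D :=
  le_csInf (Tset_nonempty M D) fun y hy => by
    obtain ⟨p, hp, x, rfl⟩ := hy; exact dminus_nonneg _

lemma muD_mem (D : W → ℤ) : muD M D ∈ Tset M D :=
  Int.csInf_mem (Tset_nonempty M D) (Tset_bddBelow M D)

/-- combined dichotomy -/
lemma not_eff_iff_mu_zero (hs : ∀ u v, M u v = M v u) (hd : ∀ v, M v v = 0)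
    (hc : (assocGraph M).Connected) (D : W → ℤ) :
    (¬ ∃ E, Effective E ∧ Equi M D E) ↔ muD M D = 0 := by
  have hW : Nonempty W := hc.nonempty
  constructor
  · intro hne
    obtain ⟨p, hp, F, hFeff, x, hFx⟩ := dichotomy_exist M hs hd hc D hne
    have h0 : (0:ℤ) ∈ Tset M D := by
      refine ⟨p, hp, x, ?_⟩
      rw [eq_comm, dminus_eq_zero_iff]
      intro v
      show 0 ≤ Nu M p v - D v + lap M x v
      have h1 : F v = (Nu M p - D) v + lap M x v := by rw [hFx]; rfl
      have h2 := hFeff v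
      simp only [Pi.sub_apply] at h1
      omega
    exact le_antisymm (csInf_le (Tset_bddBelow M D) h0) (muD_nonneg M D)
  · intro hmu hDeff
    obtain ⟨E, hEeff, y, hEy⟩ := hDeff
    obtain ⟨p, hp, x, hx⟩ := muD_mem M D
    rw [hmu] at hx
    have hHeff : Effective (fun v => Nu M p v - D v + lap M x v) :=
      (dminus_eq_zero_iff _).mp hx.symm
    refine nu_not_eff M p (x + y) ?_
    intro v
    have h1 : 0 ≤ Nu M p v - D v + lap M x v := hHeff v
    have h2 := hEeff v
    have h3 : E v = D v + lap M y v := by rw [hEy]; rfl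
    have h4 : lap M (x + y) v = lap M x v + lap M y v := by rw [lap_add]; rfl
    simp only [Pi.add_apply]
    omega

lemma neg_one_mem_bnRankSet (D : W → ℤ) : (-1 : ℤ) ∈ bnRankSet M D := Or.inl rfl

lemma bnRankSet_le (hs : ∀ u v, M u v = M v u) [Nonempty W] (D : W → ℤ) :
    ∀ k ∈ bnRankSet M D, k ≤ max (-1) (degDiv D) := by
  intro k hk
  rcases hk with hk | ⟨hk0, hprop⟩
  · rw [hk]; exact le_max_left _ _
  · rcases le_or_gt k (degDiv D) with h | h
    · exact le_trans h (le_max_right _ _)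
    · exfalso
      obtain ⟨w₀⟩ := ‹Nonempty W›
      set e : W → ℤ := fun v => if v = w₀ then k else 0 with he
      have heeff : Effective e := by intro v; rw [he]; dsimp; split <;> omega
      have hedeg : degDiv e = k := by
        rw [degDiv, he]
        simp [Finset.sum_ite_eq' univ w₀ (fun _ => k)]
      obtain ⟨f, hfeff, hflin⟩ := hprop e heeff hedeg
      rw [linEquiv_iff_equi] at hflin
      have hdeg := degDiv_equi hs hflin
      have h1 : degDiv (D - e) = degDiv D - k := by
        have hsub : degDiv (D - e) = degDiv D - degDiv e := by
          simp only [degDiv, Pi.sub_apply]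
          rw [Finset.sum_sub_distrib]
        rw [hsub, hedeg]
      have h2 : 0 ≤ degDiv f := Finset.sum_nonneg fun v _ => hfeff v
      omega

lemma bnRankSet_bddAbove (hs : ∀ u v, M u v = M v u) [Nonempty W] (D : W → ℤ) :
    BddAbove (bnRankSet M D) := ⟨max (-1) (degDiv D), fun k hk => bnRankSet_le M hs D k hk⟩

lemma bnRank_mem (hs : ∀ u v, M u v = M v u) [Nonempty W] (D : W → ℤ) :
    bnRank M D ∈ bnRankSet M D :=
  Int.csSup_mem ⟨-1, neg_one_mem_bnRankSet M D⟩ (bnRankSet_bddAbove M hs D)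

lemma bnRank_ge_neg_one (hs : ∀ u v, M u v = M v u) [Nonempty W] (D : W → ℤ) :
    -1 ≤ bnRank M D :=
  le_csSup (bnRankSet_bddAbove M hs D) (neg_one_mem_bnRankSet M D)

end RankA

section L1

variable (M : W → W → ℕ)

theorem bnRank_add_one (hs : ∀ u v, M u v = M v u) (hd : ∀ v, M v v = 0)
    (hc : (assocGraph M).Connected) (D : W → ℤ) :
    bnRank M D + 1 = muD M D := by
  haveI hW : Nonempty W := hc.nonempty
  have w₀ : W := Classical.arbitrary W
  refine le_antisymm ?_ ?_
  · -- bnRank + 1 ≤ every element of Tset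
    refine le_csInf (Tset_nonempty M D) fun y hy => ?_
    obtain ⟨p, hp, x, rfl⟩ := hy
    set H : W → ℤ := fun v => Nu M p v - D v + lap M x v with hH
    by_contra hcon
    push_neg at hcon
    have hy' : dminus H ≤ bnRank M D := by omega
    have hr0 : 0 ≤ bnRank M D := le_trans (dminus_nonneg H) hy'
    rcases bnRank_mem M hs D with h | ⟨_, hprop⟩
    · omega
    · set e : W → ℤ := fun v => max (-(H v)) 0
        + (if v = w₀ then bnRank M D - dminus H else 0) with he
      have heeff : Effective e := by
        intro v
        rw [he]
        have h1 : 0 ≤ max (-(H v)) 0 := le_max_right _ _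
        have h2 : 0 ≤ (if v = w₀ then bnRank M D - dminus H else 0) := by
          split <;> omega
        dsimp only
        omega
      have hedeg : degDiv e = bnRank M D := by
        rw [degDiv, he]
        dsimp only
        rw [Finset.sum_add_distrib, Finset.sum_ite_eq' univ w₀
          (fun _ => bnRank M D - dminus H)]
        simp only [mem_univ, if_true]
        rw [← dminus]
        omega
      obtain ⟨F, hFeff, hFlin⟩ := hprop e heeff hedeg
      rw [linEquiv_iff_equi] at hFlin
      obtain ⟨z, hz⟩ := hFlin
      refine nu_not_eff M p (x + z) ?_
      intro v
      have h1 : F v = D v - e v + lap M z v := by rw [hz]; rfl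
      have h2 : e v = max (-(H v)) 0 + (if v = w₀ then bnRank M D - dminus H else 0) := rfl
      have h3 : H v = Nu M p v - D v + lap M x v := rfl
      have h4 : 0 ≤ F v := hFeff v
      have h5 : lap M (x + z) v = lap M x v + lap M z v := by rw [lap_add]; rfl
      have h6 : 0 ≤ (if v = w₀ then bnRank M D - dminus H else 0) := by split <;> omega
      simp only [Pi.add_apply]
      omega
  · -- muD ≤ bnRank + 1
    have hnotmem : bnRank M D + 1 ∉ bnRankSet M D := by
      intro h
      have h1 := le_csSup (bnRankSet_bddAbove M hs D) h
      have h2 : sSup (bnRankSet M D) = bnRank M D := rfl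
      omega
    have h0 : 0 ≤ bnRank M D + 1 := by
      have := bnRank_ge_neg_one M hs D
      omega
    simp only [bnRankSet, Set.mem_setOf_eq] at hnotmem
    push_neg at hnotmem
    obtain ⟨e, heeff, hedeg, hnf⟩ := hnotmem.2 h0
    have hne : ¬ ∃ E, Effective E ∧ Equi M (D - e) E := by
      rintro ⟨E, hE, hq⟩
      exact hnf E hE ((linEquiv_iff_equi M _ _).mpr hq)
    obtain ⟨p, hp, F, hFeff, z, hFz⟩ := dichotomy_exist M hs hd hc (D - e) hne
    have hmem : dminus (fun v => Nu M p v - D v + lap M z v) ∈ Tset M D := ⟨p, hp, z, rfl⟩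
    have hle : dminus (fun v => Nu M p v - D v + lap M z v) ≤ degDiv e := by
      rw [dminus, degDiv]
      refine Finset.sum_le_sum fun v _ => ?_
      have h1 : F v = Nu M p v - (D v - e v) + lap M z v := by
        rw [hFz]; simp [Nu]
      have h2 : 0 ≤ F v := hFeff v
      have h3 : 0 ≤ e v := heeff v
      omega
    calc muD M D ≤ dminus (fun v => Nu M p v - D v + lap M z v) :=
          csInf_le (Tset_bddBelow M D) hmem
      _ ≤ degDiv e := hle
      _ = bnRank M D + 1 := hedeg

end L1

section L2

variable (M : W → W → ℕ)

lemma deg_nu (hs : ∀ u v, M u v = M v u) (hd : ∀ v, M v v = 0)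
    {p : W → ℕ} (hp : Function.Injective p) :
    2 * degDiv (Nu M p) = (∑ v, ∑ u, (M v u : ℤ)) - 2 * Fintype.card W := by
  set S1 : ℤ := ∑ v, ∑ u ∈ univ.filter (fun u => p u < p v), (M v u : ℤ) with hS1
  have hdeg : degDiv (Nu M p) = S1 - Fintype.card W := by
    rw [degDiv]
    simp only [Nu]
    rw [Finset.sum_sub_distrib]
    simp [hS1, Finset.card_univ]
  set A : Finset (W × W) := (univ ×ˢ univ).filter (fun z => p z.2 < p z.1) with hA
  set A' : Finset (W × W) := (univ ×ˢ univ).filter (fun z => p z.1 < p z.2) with hA'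
  have e1 : S1 = ∑ z ∈ A, (M z.1 z.2 : ℤ) := by
    rw [hS1, hA]
    rw [Finset.sum_filter]
    rw [Finset.sum_product]
    exact Finset.sum_congr rfl fun v _ => Finset.sum_filter _ _
  have e2 : ∑ z ∈ A, (M z.1 z.2 : ℤ) = ∑ z ∈ A', (M z.1 z.2 : ℤ) := by
    refine Finset.sum_nbij' (fun z => Prod.swap z) (fun z => Prod.swap z) ?_ ?_ ?_ ?_ ?_
    · intro z hz
      rw [hA, Finset.mem_filter] at hz
      rw [hA', Finset.mem_filter]
      exact ⟨by simp, hz.2⟩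
    · intro z hz
      rw [hA', Finset.mem_filter] at hz
      rw [hA, Finset.mem_filter]
      exact ⟨by simp, hz.2⟩
    · intro z _; simp
    · intro z _; simp
    · intro z _
      rw [hs]
      rfl
  have e3 : ∑ z ∈ A, (M z.1 z.2 : ℤ) + ∑ z ∈ A', (M z.1 z.2 : ℤ)
      = ∑ z ∈ univ ×ˢ univ, (M z.1 z.2 : ℤ) := by
    have h1 := Finset.sum_filter_add_sum_filter_not (univ ×ˢ univ)
      (fun z => p z.2 < p z.1) (fun z => (M z.1 z.2 : ℤ))
    have h2 : ∑ z ∈ (univ ×ˢ univ).filter (fun z => ¬ p z.2 < p z.1), (M z.1 z.2 : ℤ)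
        = ∑ z ∈ A', (M z.1 z.2 : ℤ) := by
      rw [eq_comm]
      refine Finset.sum_subset ?_ ?_
      · intro z hz
        rw [hA', Finset.mem_filter] at hz
        rw [Finset.mem_filter]
        exact ⟨hz.1, by omega⟩
      · intro z hz1 hz2
        rw [Finset.mem_filter] at hz1
        rw [hA', Finset.mem_filter] at hz2
        have : p z.1 = p z.2 := by
          have h3 : ¬ p z.1 < p z.2 := fun hh => hz2 ⟨hz1.1, hh⟩
          omega
        have : z.1 = z.2 := hp this
        rw [this, hd]
        rfl
    rw [← h1, h2]
  have e4 : ∑ z ∈ univ ×ˢ univ, (M z.1 z.2 : ℤ) = ∑ v, ∑ u, (M v u : ℤ) :=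
    Finset.sum_product univ univ (fun z => (M z.1 z.2 : ℤ))
  rw [hdeg]
  push_cast
  linarith [e1, e2, e3, e4]

lemma deg_nu_eq (hs : ∀ u v, M u v = M v u) (hd : ∀ v, M v v = 0)
    {p p' : W → ℕ} (hp : Function.Injective p) (hp' : Function.Injective p') :
    degDiv (Nu M p) = degDiv (Nu M p') := by
  have h1 := deg_nu M hs hd hp
  have h2 := deg_nu M hs hd hp'
  omega

/-- The canonical divisor. -/
def Kdiv : W → ℤ := fun v => (∑ u, (M v u : ℤ)) - 2

lemma deg_Kdiv : degDiv (Kdiv M) = (∑ v, ∑ u, (M v u : ℤ)) - 2 * Fintype.card W := by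
  simp only [degDiv, Kdiv]
  rw [Finset.sum_sub_distrib]
  simp [Finset.card_univ, mul_comm]

/-- the order reversal -/
def prev (p : W → ℕ) : W → ℕ := fun v => univ.sup p - p v

lemma prev_lt_iff (p : W → ℕ) (u v : W) : prev p u < prev p v ↔ p v < p u := by
  have h1 : p u ≤ univ.sup p := Finset.le_sup (mem_univ u)
  have h2 : p v ≤ univ.sup p := Finset.le_sup (mem_univ v)
  rw [prev, prev]
  omega

lemma prev_inj {p : W → ℕ} (hp : Function.Injective p) : Function.Injective (prev p) := by
  intro a b h
  have h1 : p a ≤ univ.sup p := Finset.le_sup (mem_univ a)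
  have h2 : p b ≤ univ.sup p := Finset.le_sup (mem_univ b)
  rw [prev, prev] at h
  exact hp (by omega)

lemma nu_add_prev (hd : ∀ v, M v v = 0) {p : W → ℕ} (hp : Function.Injective p) (v : W) :
    Nu M p v + Nu M (prev p) v = Kdiv M v := by
  have hfil : univ.filter (fun u => prev p u < prev p v) = univ.filter (fun u => p v < p u) := by
    ext u
    simp only [Finset.mem_filter, mem_univ, true_and]
    exact prev_lt_iff p u v
  have h1 := Finset.sum_filter_add_sum_filter_not univ
    (fun u => p u < p v) (fun u => (M v u : ℤ))
  have h2 : ∑ u ∈ univ.filter (fun u => ¬ p u < p v), (M v u : ℤ)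
      = ∑ u ∈ univ.filter (fun u => p v < p u), (M v u : ℤ) := by
    rw [eq_comm]
    refine Finset.sum_subset ?_ ?_
    · intro u hu
      rw [Finset.mem_filter] at hu ⊢
      exact ⟨hu.1, by omega⟩
    · intro u hu1 hu2
      rw [Finset.mem_filter] at hu1 hu2
      have h3 : ¬ p v < p u := fun hh => hu2 ⟨hu1.1, hh⟩
      have h4 : p u = p v := by omega
      have h5 : u = v := hp h4
      rw [h5, hd]
      rfl
  simp only [Nu, Kdiv]
  rw [hfil]
  omega

lemma degDiv_three (a b c : W → ℤ) :
    degDiv (fun v => a v - b v + c v) = degDiv a - degDiv b + degDiv c := by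
  rw [degDiv, degDiv, degDiv, degDiv]
  rw [← Finset.sum_sub_distrib, ← Finset.sum_add_distrib]

lemma Tset_shift (hs : ∀ u v, M u v = M v u) (hd : ∀ v, M v v = 0) (D : W → ℤ) :
    Tset M (fun v => Kdiv M v - D v)
      = (fun y => y + (degDiv (Nu M (pcan (W := W))) - degDiv D)) '' Tset M D := by
  have key : ∀ (p : W → ℕ) (hp : Function.Injective p) (x : W → ℤ),
      dminus (fun v => Nu M p v - (Kdiv M v - D v) + lap M x v)
      = dminus (fun v => Nu M (prev p) v - D v + lap M (-x) v)
        + (degDiv (Nu M (pcan (W := W))) - degDiv D) := by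
    intro p hp x
    have hpt : ∀ v, Nu M p v - (Kdiv M v - D v) + lap M x v
        = -(Nu M (prev p) v - D v + lap M (-x) v) := by
      intro v
      have h1 := nu_add_prev M hd hp v
      have h2 : lap M (-x) v = - lap M x v := by rw [lap_neg]; rfl
      omega
    have hdm : dminus (fun v => Nu M p v - (Kdiv M v - D v) + lap M x v)
        = dminus (fun v => -(Nu M (prev p) v - D v + lap M (-x) v)) := by
      rw [dminus, dminus]
      exact Finset.sum_congr rfl fun v _ => by rw [hpt v]
    rw [hdm, dminus_neg]
    congr 1
    rw [degDiv_three]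
    rw [degDiv_lap M hs, deg_nu_eq M hs hd (prev_inj hp) (pcan_inj)]
    ring
  ext y
  constructor
  · rintro ⟨p, hp, x, rfl⟩
    exact ⟨dminus (fun v => Nu M (prev p) v - D v + lap M (-x) v),
      ⟨prev p, prev_inj hp, -x, rfl⟩, (key p hp x).symm⟩
  · rintro ⟨k, ⟨p, hp, x, rfl⟩, rfl⟩
    refine ⟨prev p, prev_inj hp, -x, ?_⟩
    have h1 := key (prev p) (prev_inj hp) (-x)
    rw [h1]
    congr 1
    rw [dminus, dminus]
    refine Finset.sum_congr rfl fun v _ => ?_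
    have h2 : Nu M (prev (prev p)) v - D v + lap M (- -x) v = Nu M p v - D v + lap M x v := by
      have h3 := nu_add_prev M hd hp v
      have h4 := nu_add_prev M hd (prev_inj hp) v
      have h5 : lap M (- -x) v = lap M x v := by rw [neg_neg]
      omega
    rw [h2]

lemma muD_shift (hs : ∀ u v, M u v = M v u) (hd : ∀ v, M v v = 0) (D : W → ℤ) :
    muD M (fun v => Kdiv M v - D v)
      = muD M D + (degDiv (Nu M (pcan (W := W))) - degDiv D) := by
  rw [muD, Tset_shift M hs hd D]
  set a := degDiv (Nu M (pcan (W := W))) - degDiv D with ha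
  refine le_antisymm ?_ ?_
  · refine csInf_le ?_ ?_
    · obtain ⟨b, hb⟩ := Tset_bddBelow M D
      exact ⟨b + a, fun y hy => by
        obtain ⟨k, hk, rfl⟩ := hy
        show b + a ≤ k + a
        have := hb hk
        omega⟩
    · exact ⟨muD M D, muD_mem M D, rfl⟩
  · refine le_csInf ⟨muD M D + a, muD M D, muD_mem M D, rfl⟩ fun y hy => ?_
    obtain ⟨k, hk, rfl⟩ := hy
    show muD M D + a ≤ k + a
    have h2 : muD M D ≤ k := csInf_le (Tset_bddBelow M D) hk
    omega

theorem riemann_roch (hs : ∀ u v, M u v = M v u) (hd : ∀ v, M v v = 0)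
    (hc : (assocGraph M).Connected) (D : W → ℤ) :
    bnRank M (fun v => Kdiv M v - D v)
      = bnRank M D + (degDiv (Nu M (pcan (W := W))) - degDiv D) := by
  have h1 := bnRank_add_one M hs hd hc (fun v => Kdiv M v - D v)
  have h2 := bnRank_add_one M hs hd hc D
  have h3 := muD_shift M hs hd D
  omega

end L2

section CliffA

variable (M : W → W → ℕ)

lemma degDiv_zero_fun : degDiv (fun _ : W => (0:ℤ)) = 0 := by simp [degDiv]

lemma bnRank_zero (hs : ∀ u v, M u v = M v u) [Nonempty W] :
    bnRank M (fun _ => (0:ℤ)) = 0 := by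
  refine le_antisymm ?_ ?_
  · have h := bnRankSet_le M hs (fun _ => (0:ℤ)) _ (bnRank_mem M hs _)
    rw [degDiv_zero_fun] at h
    omega
  · refine le_csSup (bnRankSet_bddAbove M hs _) (Or.inr ⟨le_rfl, fun e he hdeg => ?_⟩)
    have he0 : ∀ v, e v = 0 := by
      have := (Finset.sum_eq_zero_iff_of_nonneg (fun v _ => he v)).mp hdeg
      exact fun v => this v (mem_univ v)
    refine ⟨fun _ => 0, fun v => le_rfl, (linEquiv_iff_equi M _ _).mpr ⟨0, ?_⟩⟩
    rw [lap_zero]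
    funext v
    simp [he0 v]

lemma exists_sub_div (e : W → ℤ) (he : Effective e) : ∀ m : ℕ, (m : ℤ) ≤ degDiv e →
    ∃ e1 : W → ℤ, Effective e1 ∧ (∀ v, e1 v ≤ e v) ∧ degDiv e1 = m := by
  intro m
  induction m with
  | zero =>
    exact fun _ => ⟨fun _ => 0, fun v => le_rfl, fun v => he v, by simp [degDiv]⟩
  | succ m ih =>
    intro hm
    obtain ⟨e1, h1, h2, h3⟩ := ih (by push_cast at hm ⊢; omega)
    have hex : ∃ v, e1 v < e v := by
      by_contra hcon
      push_neg at hcon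
      have hle : degDiv e ≤ degDiv e1 := Finset.sum_le_sum fun v _ => hcon v
      push_cast at hm
      omega
    obtain ⟨v₀, hv₀⟩ := hex
    refine ⟨fun v => e1 v + (if v = v₀ then 1 else 0), ?_, ?_, ?_⟩
    · intro v
      have := h1 v
      dsimp only
      split <;> omega
    · intro v
      have := h2 v
      dsimp only
      by_cases hv : v = v₀
      · subst hv; simp; omega
      · simp [hv]; omega
    · rw [degDiv, Finset.sum_add_distrib, Finset.sum_ite_eq' univ v₀ (fun _ => (1:ℤ))]
      simp only [mem_univ, if_true]
      rw [← degDiv, h3]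
      push_cast
      ring

lemma bnRank_subadd (hs : ∀ u v, M u v = M v u) [Nonempty W] (D1 D2 : W → ℤ)
    (h1 : 0 ≤ bnRank M D1) (h2 : 0 ≤ bnRank M D2) :
    bnRank M D1 + bnRank M D2 ≤ bnRank M (D1 + D2) := by
  refine le_csSup (bnRankSet_bddAbove M hs (D1 + D2)) (Or.inr ⟨by omega, fun e he hdeg => ?_⟩)
  rcases bnRank_mem M hs D1 with hmem1 | ⟨_, hp1⟩
  · omega
  rcases bnRank_mem M hs D2 with hmem2 | ⟨_, hp2⟩
  · omega
  obtain ⟨e1, he1, hle1, hdeg1⟩ := exists_sub_div e he (bnRank M D1).toNat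
    (by rw [Int.toNat_of_nonneg h1]; omega)
  set e2 : W → ℤ := fun v => e v - e1 v with he2def
  have he2 : Effective e2 := fun v => by rw [he2def]; dsimp; have := hle1 v; omega
  have hdeg2 : degDiv e2 = bnRank M D2 := by
    rw [he2def, degDiv]
    rw [Finset.sum_sub_distrib]
    rw [← degDiv, ← degDiv, hdeg1, Int.toNat_of_nonneg h1] at *
    omega
  have hdeg1' : degDiv e1 = bnRank M D1 := by rw [hdeg1, Int.toNat_of_nonneg h1]
  obtain ⟨F1, hF1eff, hF1⟩ := hp1 e1 he1 hdeg1'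
  obtain ⟨F2, hF2eff, hF2⟩ := hp2 e2 he2 hdeg2
  rw [linEquiv_iff_equi] at hF1 hF2
  refine ⟨F1 + F2, fun v => add_nonneg (hF1eff v) (hF2eff v),
    (linEquiv_iff_equi M _ _).mpr ?_⟩
  have hsplit : (D1 + D2) - e = (D1 - e1) + (D2 - e2) := by
    funext v
    simp only [Pi.add_apply, Pi.sub_apply, he2def]
    ring
  rw [hsplit]
  exact equi_add hF1 hF2

theorem cliffordA (hs : ∀ u v, M u v = M v u) (hd : ∀ v, M v v = 0)
    (hc : (assocGraph M).Connected) (D : W → ℤ) (h0 : 0 ≤ degDiv D)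
    (h1 : degDiv D ≤ 2 * degDiv (Nu M (pcan (W := W)))) :
    2 * bnRank M D ≤ degDiv D := by
  haveI : Nonempty W := hc.nonempty
  have hKdeg : degDiv (Kdiv M) = 2 * degDiv (Nu M (pcan (W := W))) := by
    have ha := deg_Kdiv M
    have hb := deg_nu M hs hd (pcan_inj (W := W))
    omega
  have hRR := riemann_roch M hs hd hc D
  have hr1 := bnRank_ge_neg_one M hs D
  rcases le_or_gt (bnRank M D) 0 with hle | hgt
  · omega
  have hKrank : bnRank M (Kdiv M) = degDiv (Nu M (pcan (W := W))) := by
    have hRRK := riemann_roch M hs hd hc (Kdiv M)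
    have hz : (fun v => Kdiv M v - Kdiv M v) = (fun _ : W => (0:ℤ)) := by
      funext v; ring
    rw [hz, bnRank_zero M hs] at hRRK
    omega
  have hrK1 := bnRank_ge_neg_one M hs (fun v => Kdiv M v - D v)
  rcases le_or_gt (bnRank M (fun v => Kdiv M v - D v)) (-1) with hKneg | hKpos
  · omega
  · have hsub := bnRank_subadd M hs D (fun v => Kdiv M v - D v) (by omega) (by omega)
    have hsum : D + (fun v => Kdiv M v - D v) = Kdiv M := by
      funext v; simp
    rw [hsum, hKrank] at hsub
    omega

end CliffA

end Cliff

namespace CliffB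

open Cliff

variable {V : Type} [Fintype V] [DecidableEq V] (ω : V → ℕ) (m : V → V → ℕ)

lemma bullet_diag (a : BV ω m) : bulletM ω m a a = 0 := by
  cases a with
  | inl u => simp [bulletM]
  | inr s => obtain ⟨v, i⟩ := s; simp [bulletM]

lemma bullet_symm (hsymm : ∀ u v, m u v = m v u) (a b : BV ω m) :
    bulletM ω m a b = bulletM ω m b a := by
  cases a with
  | inl u =>
    cases b with
    | inl v =>
      by_cases h : u = v
      · subst h; rfl
      · simp [bulletM, h, Ne.symm h, hsymm u v]
    | inr s =>
      obtain ⟨v, i⟩ := s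
      by_cases h : u = v
      · subst h; simp [bulletM]
      · have h' : ¬ v = u := fun hh => h hh.symm
        simp [bulletM, h, h']
  | inr s =>
    obtain ⟨u, i⟩ := s
    cases b with
    | inl v =>
      by_cases h : u = v
      · subst h; simp [bulletM]
      · have h' : ¬ v = u := fun hh => h hh.symm
        simp [bulletM, h, h']
    | inr s' => obtain ⟨v, j⟩ := s'; rfl

/-- the inclusion as a graph homomorphism -/
def bulletHom : assocGraph m →g assocGraph (bulletM ω m) where
  toFun := Sum.inl
  map_rel' := by
    rintro u v ⟨hne, hpos⟩
    refine ⟨by simp [hne], ?_⟩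
    rcases hpos with h | h
    · left; simpa [bulletM, hne] using h
    · right
      have hne' : ¬ (v = u) := fun hh => hne hh.symm
      simpa [bulletM, hne'] using h

lemma bullet_conn (hconn : (assocGraph m).Connected) :
    (assocGraph (bulletM ω m)).Connected := by
  have hV : Nonempty V := hconn.nonempty
  have hreach_inl : ∀ u v : V,
      (assocGraph (bulletM ω m)).Reachable (Sum.inl u) (Sum.inl v) :=
    fun u v => (hconn.preconnected u v).map (bulletHom ω m)
  have hadj_inr : ∀ (v : V) (i : Fin (ω v + m v v)),
      (assocGraph (bulletM ω m)).Adj (Sum.inr ⟨v, i⟩) (Sum.inl v) := by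
    intro v i
    refine ⟨by simp, Or.inl ?_⟩
    simp [bulletM]
  rw [SimpleGraph.connected_iff]
  refine ⟨?_, ⟨Sum.inl (Classical.arbitrary V)⟩⟩
  intro a b
  cases a with
  | inl u =>
    cases b with
    | inl v => exact hreach_inl u v
    | inr s =>
      obtain ⟨v, i⟩ := s
      exact (hreach_inl u v).trans (hadj_inr v i).symm.reachable
  | inr s =>
    obtain ⟨u, i⟩ := s
    cases b with
    | inl v => exact (hadj_inr u i).reachable.trans (hreach_inl u v)
    | inr s' =>
      obtain ⟨v, j⟩ := s'
      exact ((hadj_inr u i).reachable.trans (hreach_inl u v)).trans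
        (hadj_inr v j).symm.reachable

lemma deg_iota (d : V → ℤ) : degDiv (iota ω m d) = degDiv d := by
  rw [degDiv, degDiv, Fintype.sum_sum_type]
  have h2 : ∑ s : (Σ v : V, Fin (ω v + m v v)), iota ω m d (Sum.inr s) = 0 :=
    Finset.sum_eq_zero fun s _ => rfl
  rw [h2, add_zero]
  rfl

lemma card_BV : (Fintype.card (BV ω m) : ℤ)
    = (Fintype.card V : ℤ) + (∑ v, (ω v : ℤ)) + ∑ v, (m v v : ℤ) := by
  have h : Fintype.card (BV ω m) = Fintype.card V + ∑ v, (ω v + m v v) := by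
    rw [Fintype.card_sum, Fintype.card_sigma]
    simp
  rw [h]
  push_cast
  rw [Finset.sum_add_distrib]
  ring

lemma sum_bullet (hsymm : ∀ u v, m u v = m v u) :
    (∑ a : BV ω m, ∑ b : BV ω m, (bulletM ω m a b : ℤ))
      = (∑ u, ∑ v, (m u v : ℤ)) + 3 * (∑ v, (m v v : ℤ)) + 4 * (∑ v, (ω v : ℤ)) := by
  rw [Fintype.sum_sum_type]
  have hinl : ∀ u : V, ∑ b : BV ω m, (bulletM ω m (Sum.inl u) b : ℤ)
      = (∑ v, (m u v : ℤ)) - (m u u : ℤ) + 2 * ((ω u : ℤ) + (m u u : ℤ)) := by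
    intro u
    rw [Fintype.sum_sum_type]
    have p1 : ∑ v : V, (bulletM ω m (Sum.inl u) (Sum.inl v) : ℤ)
        = (∑ v, (m u v : ℤ)) - (m u u : ℤ) := by
      have hterm : ∀ v : V, (bulletM ω m (Sum.inl u) (Sum.inl v) : ℤ)
          = (m u v : ℤ) - (if u = v then (m u v : ℤ) else 0) := by
        intro v
        by_cases h : u = v
        · subst h; simp [bulletM]
        · simp [bulletM, h]
      rw [Finset.sum_congr rfl fun v _ => hterm v, Finset.sum_sub_distrib,
        Finset.sum_ite_eq univ u (fun v => (m u v : ℤ))]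
      simp
    have p2 : ∑ s : (Σ v : V, Fin (ω v + m v v)), (bulletM ω m (Sum.inl u) (Sum.inr s) : ℤ)
        = 2 * ((ω u : ℤ) + (m u u : ℤ)) := by
      rw [← Finset.univ_sigma_univ, Finset.sum_sigma]
      have hterm : ∀ v : V, ∑ i : Fin (ω v + m v v),
          (bulletM ω m (Sum.inl u) (Sum.inr ⟨v, i⟩) : ℤ)
          = (if u = v then 2 * ((ω v : ℤ) + (m v v : ℤ)) else 0) := by
        intro v
        have hstep : ∀ i : Fin (ω v + m v v), (bulletM ω m (Sum.inl u) (Sum.inr ⟨v, i⟩) : ℤ)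
            = (if u = v then (2:ℤ) else 0) := by
          intro i
          by_cases h : u = v <;> simp [bulletM, h]
        rw [Finset.sum_congr rfl fun i _ => hstep i, Finset.sum_const, Finset.card_univ,
          Fintype.card_fin]
        by_cases h : u = v
        · simp only [h, if_true]
          push_cast
          ring
        · simp [h]
      rw [Finset.sum_congr rfl fun v _ => hterm v,
        Finset.sum_ite_eq univ u (fun v => 2 * ((ω v : ℤ) + (m v v : ℤ)))]
      simp
    rw [p1, p2]
  have hinr : ∀ s : (Σ v : V, Fin (ω v + m v v)),
      ∑ b : BV ω m, (bulletM ω m (Sum.inr s) b : ℤ) = 2 := by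
    rintro ⟨v, i⟩
    rw [Fintype.sum_sum_type]
    have p1 : ∑ u : V, (bulletM ω m (Sum.inr ⟨v, i⟩) (Sum.inl u) : ℤ) = 2 := by
      have hterm : ∀ u : V, (bulletM ω m (Sum.inr ⟨v, i⟩) (Sum.inl u) : ℤ)
          = (if v = u then (2:ℤ) else 0) := by
        intro u
        by_cases h : v = u <;> simp [bulletM, h]
      rw [Finset.sum_congr rfl fun u _ => hterm u,
        Finset.sum_ite_eq univ v (fun _ => (2:ℤ))]
      simp
    have p2 : ∑ s' : (Σ v : V, Fin (ω v + m v v)),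
        (bulletM ω m (Sum.inr ⟨v, i⟩) (Sum.inr s') : ℤ) = 0 := by
      refine Finset.sum_eq_zero fun s' _ => ?_
      obtain ⟨w, j⟩ := s'
      rfl
    rw [p1, p2]
    norm_num
  have hA : ∑ u, ((∑ v, (m u v : ℤ)) - (m u u : ℤ) + 2 * ((ω u : ℤ) + (m u u : ℤ)))
      = (∑ u, ∑ v, (m u v : ℤ)) + (∑ v, (m v v : ℤ)) + 2 * (∑ v, (ω v : ℤ)) := by
    rw [Finset.sum_add_distrib, Finset.sum_sub_distrib, ← Finset.mul_sum,
      Finset.sum_add_distrib]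
    ring
  have hB : ((∑ i, (ω i + m i i) : ℕ) : ℤ) = (∑ v, (ω v : ℤ)) + ∑ v, (m v v : ℤ) := by
    push_cast
    rw [Finset.sum_add_distrib]
  rw [Finset.sum_congr rfl fun u _ => hinl u, Finset.sum_congr rfl fun s _ => hinr s,
    Finset.sum_const, Finset.card_univ, Fintype.card_sigma]
  simp only [Fintype.card_fin, nsmul_eq_mul]
  rw [hA, hB]
  ring

lemma genus_bullet (hsymm : ∀ u v, m u v = m v u) :
    2 * degDiv (Nu (bulletM ω m) (pcan (W := BV ω m))) = 2 * genusW m ω - 2 := by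
  have hdn := deg_nu (bulletM ω m) (bullet_symm ω m hsymm) (bullet_diag ω m)
    (pcan_inj (W := BV ω m))
  rw [sum_bullet ω m hsymm] at hdn
  have hcard := card_BV ω m
  set S : ℤ := ∑ u, ∑ v, (m u v : ℤ) with hS
  set Dg : ℤ := ∑ v, (m v v : ℤ) with hDg
  set Ω : ℤ := ∑ v, (ω v : ℤ) with hΩ
  set n : ℤ := (Fintype.card V : ℤ) with hn
  have h1 : 2 * degDiv (Nu (bulletM ω m) (pcan (W := BV ω m))) = S + Dg + 2 * Ω - 2 * n := by
    rw [hdn, hcard]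
    ring
  have heven : S + Dg = 2 * (degDiv (Nu (bulletM ω m) (pcan (W := BV ω m))) - Ω + n) := by
    omega
  have hgen : genusW m ω = (degDiv (Nu (bulletM ω m) (pcan (W := BV ω m))) - Ω + n)
      - n + 1 + Ω := by
    rw [genusW, ← hS, ← hDg, ← hΩ, ← hn, heven]
    rw [Int.mul_ediv_cancel_left _ (by norm_num : (2:ℤ) ≠ 0)]
  rw [hgen]
  ring

end CliffB

/-- **Clifford inequality for weighted graphs with loops.** -/
theorem wRank_clifford {V : Type} [Fintype V] [DecidableEq V]
    (ω : V → ℕ) (m : V → V → ℕ) (hsymm : ∀ u v, m u v = m v u)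
    (hconn : (assocGraph m).Connected)
    (d : V → ℤ) (h0 : 0 ≤ degDiv d) (h1 : degDiv d ≤ 2 * genusW m ω - 2) :
    2 * wRank ω m d ≤ degDiv d := by
  have hres := Cliff.cliffordA (bulletM ω m) (CliffB.bullet_symm ω m hsymm)
    (CliffB.bullet_diag ω m) (CliffB.bullet_conn ω m hconn) (iota ω m d)
    (by rw [CliffB.deg_iota]; exact h0)
    (by
      rw [CliffB.deg_iota]
      have := CliffB.genus_bullet ω m hsymm
      omega)
  rw [CliffB.deg_iota ω m d] at hres
  exact hres
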